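/- Let p > 2 be a prime, r ≥ 1, and let G_r be Ito's group. Then |fiber(g)| = (p² − 1)·p^{r²+r+1} for every g ∈ K(G_r) with g ≠ 1, and |fiber(1)| = (p^{r+1} + p^r − 1)·p^{r²+r+1}. -/

import Mathlib

open scoped Classical

namespace Paper

/-- The commutator `[x,y] = x⁻¹y⁻¹xy`. -/
def comm {G : Type*} [Group G] (x y : G) : G := x⁻¹ * y⁻¹ * x * y

/-- `K(G)`, the set of commutators in `G`. -/
def KG (G : Type*) [Group G] : Set G := {g : G | ∃ x y : G, comm x y = g}

/-- The fiber of `g` under the commutator word map. -/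
def fiber {G : Type*} [Group G] (g : G) : Set (G × G) := {q : G × G | comm q.1 q.2 = g}

/-- `Pr_g(G) = |fiber(g)| / |G|²`. -/
noncomputable def Pr (G : Type*) [Group G] (g : G) : ℚ :=
  (Nat.card (fiber g) : ℚ) / ((Nat.card G : ℚ)) ^ 2

/-- `P(G) = {Pr_g(G) : g ∈ K(G), g ≠ 1}`. -/
noncomputable def PSet (G : Type*) [Group G] : Set ℚ :=
  {q : ℚ | ∃ g ∈ KG G, g ≠ 1 ∧ Pr G g = q}

/-- The conjugacy class `g^G` of `g` in `G`. -/
def conjClass {G : Type*} [Group G] (g : G) : Set G := {h : G | ∃ x : G, x⁻¹ * g * x = h}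

/-- `G` is of conjugate type `(1, m)`: every noncentral element has conjugacy
class of size exactly `m`. -/
def IsConjugateType1 (G : Type*) [Group G] (m : ℕ) : Prop :=
  ∀ g : G, g ∉ Subgroup.center G → Nat.card (conjClass g) = m

/-- `TZ_g = {xZ(G) ∈ G/Z(G) : g ∈ [x,G]}`. -/
def TZ (G : Type*) [Group G] (g : G) : Set (G ⧸ Subgroup.center G) :=
  {xz : G ⧸ Subgroup.center G |
    ∃ x : G, (QuotientGroup.mk x : G ⧸ Subgroup.center G) = xz ∧ ∃ h : G, comm x h = g}




/-- The relations of Ito's group `G_r`: the commutators are central,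
and the generators and their commutators have order dividing `p`. -/
def itoRels (p r : ℕ) : Set (FreeGroup (Fin (r + 1))) :=
  {w : FreeGroup (Fin (r + 1)) |
    (∃ i j k : Fin (r + 1), i < j ∧
      w = comm (FreeGroup.of k) (comm (FreeGroup.of i) (FreeGroup.of j))) ∨
    (∃ i : Fin (r + 1), w = (FreeGroup.of i) ^ p) ∨
    (∃ i j : Fin (r + 1), i < j ∧ w = (comm (FreeGroup.of i) (FreeGroup.of j)) ^ p)}

/-- Ito's group `G_r`, presented on `r+1` generators. -/
abbrev ItoGroup (p r : ℕ) : Type := PresentedGroup (itoRels p r)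

/-- The generators `a_1, …, a_{r+1}` of Ito's group (0-indexed). -/
def itoGen (p r : ℕ) (i : Fin (r + 1)) : ItoGroup p r := PresentedGroup.of i


section CommLemmas

variable {G : Type*} [Group G]

@[simp] lemma map_comm {H : Type*} [Group H] (φ : G →* H) (x y : G) :
    φ (comm x y) = comm (φ x) (φ y) := by simp [comm]

lemma mul_eq_mul_comm (x y : G) : x * y = y * x * comm x y := by
  simp [comm, mul_assoc]

lemma comm_inv (x y : G) : (comm x y)⁻¹ = comm y x := by
  simp [comm, mul_assoc]

@[simp] lemma comm_self (x : G) : comm x x = 1 := by simp [comm, mul_assoc]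

@[simp] lemma comm_one_right (x : G) : comm x 1 = 1 := by simp [comm]

@[simp] lemma comm_one_left (x : G) : comm 1 x = 1 := by simp [comm]

/-- being central -/
def IsCtr (x : G) : Prop := ∀ g : G, g * x = x * g

lemma IsCtr.one : IsCtr (1 : G) := fun g => by simp

lemma IsCtr.mul {x y : G} (hx : IsCtr x) (hy : IsCtr y) : IsCtr (x * y) := fun g => by
  rw [← mul_assoc, hx, mul_assoc, hy, mul_assoc]

lemma IsCtr.inv {x : G} (hx : IsCtr x) : IsCtr x⁻¹ := fun g => by
  have := hx g⁻¹
  calc g * x⁻¹ = x⁻¹ * (x * g * x⁻¹) := by group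
  _ = x⁻¹ * (g * x * x⁻¹) := by rw [← hx g]
  _ = x⁻¹ * g := by group

lemma IsCtr.pow {x : G} (hx : IsCtr x) (n : ℕ) : IsCtr (x ^ n) := by
  induction n with
  | zero => simpa using IsCtr.one
  | succ n ih => rw [pow_succ]; exact ih.mul hx

lemma comm_mul_right (a u v : G) : comm a (u * v) = comm a v * (v⁻¹ * comm a u * v) := by
  simp [comm, mul_assoc]

lemma comm_mul_left (u v y : G) : comm (u * v) y = (v⁻¹ * comm u y * v) * comm v y := by
  simp [comm, mul_assoc]

lemma comm_pow_right (a b : G) (h : IsCtr (comm a b)) (m : ℕ) :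
    comm a (b ^ m) = comm a b ^ m := by
  induction m with
  | zero => simp
  | succ m ih =>
    rw [pow_succ, comm_mul_right, ih]
    have : b⁻¹ * comm a b ^ m * b = comm a b ^ m := by
      rw [mul_assoc, ← h.pow m b, ← mul_assoc]; simp
    rw [this, ← pow_succ']

lemma comm_pow_left (a b : G) (h : IsCtr (comm a b)) (n : ℕ) :
    comm (a ^ n) b = comm a b ^ n := by
  induction n with
  | zero => simp
  | succ n ih =>
    rw [pow_succ, comm_mul_left, ih]
    have : a⁻¹ * comm a b ^ n * a = comm a b ^ n := by
      rw [mul_assoc, ← h.pow n a, ← mul_assoc]; simp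
    rw [this, ← pow_succ]

end CommLemmas

section ListLemmas

variable {G : Type*} [Group G] {α : Type*}

lemma isCtr_list_prod (L : List α) (f : α → G) (h : ∀ i ∈ L, IsCtr (f i)) :
    IsCtr (L.map f).prod := by
  induction L with
  | nil => simpa using IsCtr.one
  | cons a t ih =>
    simp only [List.map_cons, List.prod_cons]
    exact (h a (by simp)).mul (ih fun i hi => h i (by simp [hi]))

lemma list_prod_eq_one (L : List α) (f : α → G) (h : ∀ i ∈ L, f i = 1) :
    (L.map f).prod = 1 := by
  induction L with
  | nil => simp
  | cons a t ih =>
    simp only [List.map_cons, List.prod_cons, h a (by simp),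
      ih fun i hi => h i (by simp [hi]), one_mul]

lemma list_prod_single (L : List α) (hL : L.Nodup) (f : α → G) (k : α) (hk : k ∈ L)
    (h : ∀ i ∈ L, i ≠ k → f i = 1) : (L.map f).prod = f k := by
  induction L with
  | nil => simp at hk
  | cons a t ih =>
    rcases List.mem_cons.mp hk with rfl | hkt
    · have : (t.map f).prod = 1 := by
        refine list_prod_eq_one t f fun i hi => h i (by simp [hi]) ?_
        rintro rfl; exact (List.nodup_cons.mp hL).1 hi
      simp [this]
    · have ha : f a = 1 := h a (by simp) (by rintro rfl; exact (List.nodup_cons.mp hL).1 hkt)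
      simp only [List.map_cons, List.prod_cons, ha, one_mul]
      exact ih (List.nodup_cons.mp hL).2 hkt fun i hi hik => h i (by simp [hi]) hik

variable (Z : Subgroup G)

lemma list_pull (hZ : ∀ z ∈ Z, IsCtr z) (L : List α) (f : α → G) (y : G)
    (h : ∀ i ∈ L, ∃ ζ ∈ Z, f i * y = y * f i * ζ) :
    ∃ ζ ∈ Z, (L.map f).prod * y = y * (L.map f).prod * ζ := by
  induction L with
  | nil => exact ⟨1, one_mem _, by simp⟩
  | cons a t ih =>
    obtain ⟨ζa, hζa, ha⟩ := h a (by simp)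
    obtain ⟨ζ, hζ, hP⟩ := ih fun i hi => h i (by simp [hi])
    refine ⟨ζa * ζ, mul_mem hζa hζ, ?_⟩
    set P := (t.map f).prod
    simp only [List.map_cons, List.prod_cons]
    calc f a * P * y = f a * (y * P * ζ) := by rw [mul_assoc, hP]
    _ = (f a * y) * P * ζ := by group
    _ = (y * f a * ζa) * P * ζ := by rw [ha]
    _ = y * f a * (ζa * P) * ζ := by group
    _ = y * f a * (P * ζa) * ζ := by rw [hZ ζa hζa P]
    _ = y * (f a * P) * (ζa * ζ) := by group

lemma list_prod_mul (hZ : ∀ z ∈ Z, IsCtr z) (L : List α) (f g : α → G)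
    (h : ∀ i ∈ L, ∀ j ∈ L, ∃ ζ ∈ Z, f i * g j = g j * f i * ζ) :
    ∃ ζ ∈ Z, (L.map f).prod * (L.map g).prod = (L.map fun i => f i * g i).prod * ζ := by
  induction L with
  | nil => exact ⟨1, one_mem _, by simp⟩
  | cons a t ih =>
    obtain ⟨ζ, hζ, hP⟩ := ih fun i hi j hj => h i (by simp [hi]) j (by simp [hj])
    obtain ⟨ζa, hζa, hpull⟩ := list_pull Z hZ t f (g a)
      (fun i hi => h i (by simp [hi]) a (by simp))
    refine ⟨ζa * ζ, mul_mem hζa hζ, ?_⟩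
    set Pf := (t.map f).prod
    set Pg := (t.map g).prod
    set Pfg := (t.map fun i => f i * g i).prod
    simp only [List.map_cons, List.prod_cons]
    calc f a * Pf * (g a * Pg) = f a * (Pf * g a) * Pg := by group
    _ = f a * (g a * Pf * ζa) * Pg := by rw [hpull]
    _ = (f a * g a) * Pf * (ζa * Pg) := by group
    _ = (f a * g a) * Pf * (Pg * ζa) := by rw [hZ ζa hζa Pg]
    _ = (f a * g a) * (Pf * Pg) * ζa := by group
    _ = (f a * g a) * (Pfg * ζ) * ζa := by rw [hP]
    _ = (f a * g a) * Pfg * (ζ * ζa) := by group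
    _ = (f a * g a) * Pfg * (ζa * ζ) := by rw [hZ ζ hζ ζa]
    _ = f a * g a * Pfg * (ζa * ζ) := by group

lemma list_prod_mul_exact (L : List α) (f g : α → G)
    (hc : ∀ i ∈ L, IsCtr (g i)) :
    (L.map f).prod * (L.map g).prod = (L.map fun i => f i * g i).prod := by
  induction L with
  | nil => simp
  | cons a t ih =>
    set Pf := (t.map f).prod
    set Pg := (t.map g).prod
    have hga : IsCtr (g a) := hc a (by simp)
    simp only [List.map_cons, List.prod_cons]
    calc f a * Pf * (g a * Pg) = f a * (Pf * g a) * Pg := by group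
    _ = f a * (g a * Pf) * Pg := by rw [← hga Pf]
    _ = (f a * g a) * (Pf * Pg) := by group
    _ = (f a * g a) * (t.map fun i => f i * g i).prod := by
        rw [ih fun i hi => hc i (by simp [hi])]

end ListLemmas

section Model

variable (p r : ℕ)

/-- index pairs i < j -/
def PairIdx (r : ℕ) : Type := {q : Fin (r + 1) × Fin (r + 1) // q.1 < q.2}

instance : DecidableEq (PairIdx r) :=
  inferInstanceAs (DecidableEq {q : Fin (r + 1) × Fin (r + 1) // q.1 < q.2})

instance : Fintype (PairIdx r) :=
  inferInstanceAs (Fintype {q : Fin (r + 1) × Fin (r + 1) // q.1 < q.2})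

/-- the concrete model of Ito's group -/
@[ext] structure MD (p r : ℕ) where
  a : Fin (r + 1) → ZMod p
  c : PairIdx r → ZMod p

namespace MD

variable {p r}

instance : One (MD p r) := ⟨⟨0, 0⟩⟩
instance : Mul (MD p r) :=
  ⟨fun x y => ⟨x.a + y.a, x.c + y.c + fun q => -(x.a q.1.2 * y.a q.1.1)⟩⟩
instance : Inv (MD p r) :=
  ⟨fun x => ⟨-x.a, -x.c + fun q => -(x.a q.1.2 * x.a q.1.1)⟩⟩

@[simp] lemma one_a : (1 : MD p r).a = 0 := rfl
@[simp] lemma one_c : (1 : MD p r).c = 0 := rfl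
@[simp] lemma mul_a (x y : MD p r) : (x * y).a = x.a + y.a := rfl
lemma mul_c (x y : MD p r) :
    (x * y).c = x.c + y.c + fun q => -(x.a q.1.2 * y.a q.1.1) := rfl
@[simp] lemma inv_a (x : MD p r) : x⁻¹.a = -x.a := rfl
lemma inv_c (x : MD p r) : x⁻¹.c = -x.c + fun q => -(x.a q.1.2 * x.a q.1.1) := rfl

instance : Group (MD p r) :=
  Group.ofLeftAxioms
    (fun x y z => by
      ext q <;>
        simp only [mul_a, mul_c, Pi.add_apply, Pi.neg_apply] <;> ring)
    (fun x => by
      ext q <;>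
        simp only [mul_a, mul_c, one_a, one_c, Pi.add_apply, Pi.zero_apply,
          Pi.neg_apply, zero_add, add_zero, zero_mul, mul_zero, neg_zero])
    (fun x => by
      ext q <;>
        simp only [mul_a, mul_c, inv_a, inv_c, one_a, one_c, Pi.add_apply,
          Pi.zero_apply, Pi.neg_apply, neg_add_cancel] <;> ring)

lemma comm_eq (x y : MD p r) :
    Paper.comm x y =
      ⟨0, fun q => x.a q.1.1 * y.a q.1.2 - x.a q.1.2 * y.a q.1.1⟩ := by
  ext q
  · simp [Paper.comm]
  · simp only [Paper.comm, mul_c, mul_a, inv_c, inv_a, Pi.add_apply, Pi.neg_apply]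
    ring

@[simp] lemma comm_a (x y : MD p r) : (Paper.comm x y).a = 0 := by rw [comm_eq]

lemma comm_c (x y : MD p r) :
    (Paper.comm x y).c = fun q => x.a q.1.1 * y.a q.1.2 - x.a q.1.2 * y.a q.1.1 := by
  rw [comm_eq]

/-- multiplication of "central" elements -/
lemma mul_of_a_zero (A B : PairIdx r → ZMod p) :
    (⟨0, A⟩ : MD p r) * ⟨0, B⟩ = ⟨0, A + B⟩ := by
  ext q
  · simp
  · simp [mul_c]

lemma pow_of_a_zero (A : PairIdx r → ZMod p) (n : ℕ) :
    (⟨0, A⟩ : MD p r) ^ n = ⟨0, n • A⟩ := by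
  induction n with
  | zero => ext q <;> simp
  | succ n ih =>
    rw [pow_succ, ih, mul_of_a_zero, add_nsmul, one_nsmul]

/-- the generators of the model -/
def gen (p r : ℕ) (i : Fin (r + 1)) : MD p r := ⟨Pi.single i 1, 0⟩

lemma gen_pow (i : Fin (r + 1)) (n : ℕ) :
    gen p r i ^ n = ⟨Pi.single i (n : ZMod p), 0⟩ := by
  induction n with
  | zero => ext q <;> simp
  | succ n ih =>
    rw [pow_succ, ih]
    ext q
    · simp only [mul_a, gen, Pi.add_apply]
      rcases eq_or_ne q i with rfl | hq
      · simp only [Pi.single_eq_same]; push_cast; ring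
      · simp [Pi.single_eq_of_ne hq]
    · simp only [mul_c, gen, Pi.add_apply, Pi.zero_apply, add_zero, zero_add]
      rcases eq_or_ne q.1.1 i with h1 | h1
      · rcases eq_or_ne q.1.2 i with h2 | h2
        · exact absurd (h1 ▸ h2 ▸ q.2) (lt_irrefl _)
        · simp [Pi.single_eq_of_ne h2]
      · simp [Pi.single_eq_of_ne h1]

lemma gen_pow_p [NeZero p] (i : Fin (r + 1)) : gen p r i ^ p = 1 := by
  rw [gen_pow]
  ext q <;> simp [ZMod.natCast_self]

lemma comm_gen (i j : Fin (r + 1)) (hij : i < j) :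
    Paper.comm (gen p r i) (gen p r j) = ⟨0, Pi.single ⟨(i, j), hij⟩ 1⟩ := by
  rw [comm_eq]
  ext q
  · simp
  · simp only [gen]
    rcases eq_or_ne q ⟨(i, j), hij⟩ with rfl | hq
    · simp [Pi.single_eq_of_ne (ne_of_gt hij)]
      exact (Pi.single_eq_same (M := fun _ : PairIdx r => ZMod p) (⟨(i, j), hij⟩ : PairIdx r) (1 : ZMod p)).symm
    · rw [Pi.single_eq_of_ne hq]
      have h2 : (Pi.single i (1 : ZMod p) : Fin (r+1) → ZMod p) q.1.2 * (Pi.single j (1 : ZMod p) : Fin (r+1) → ZMod p) q.1.1 = 0 := by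
        rcases eq_or_ne q.1.1 j with h1 | h1
        · rcases eq_or_ne q.1.2 i with h2 | h2
          · exact absurd (h2 ▸ h1 ▸ q.2) (by simp [not_lt.mpr hij.le])
          · simp [Pi.single_eq_of_ne h2]
        · simp [Pi.single_eq_of_ne h1]
      have : q.1.1 ≠ i ∨ q.1.2 ≠ j := by
        by_contra hc
        push_neg at hc
        exact hq (Subtype.ext (Prod.ext hc.1 hc.2))
      rcases this with h | h
      · rw [Pi.single_eq_of_ne h, h2]; ring
      · rw [Pi.single_eq_of_ne h, h2]; ring

end MD

end Model

namespace Ito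

variable (p r : ℕ)

/-- generators -/
def b (i : Fin (r + 1)) : ItoGroup p r := PresentedGroup.of i

/-- commutators of generators -/
def z (i j : Fin (r + 1)) : ItoGroup p r := comm (b p r i) (b p r j)

variable {p r}

lemma rel_one {w : FreeGroup (Fin (r + 1))} (hw : w ∈ itoRels p r) :
    PresentedGroup.mk (itoRels p r) w = 1 :=
  (QuotientGroup.eq_one_iff _).mpr (Subgroup.subset_normalClosure hw)

lemma mk_of (i : Fin (r + 1)) :
    PresentedGroup.mk (itoRels p r) (FreeGroup.of i) = b p r i := rfl

lemma comm_z_one (k i j : Fin (r + 1)) (hij : i < j) :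
    comm (b p r k) (z p r i j) = 1 := by
  have := rel_one (p := p) (Or.inl ⟨i, j, k, hij, rfl⟩)
  rwa [map_comm, map_comm, mk_of, mk_of, mk_of] at this

lemma b_pow (i : Fin (r + 1)) : b p r i ^ p = 1 := by
  have := rel_one (p := p) (r := r) (Or.inr (Or.inl ⟨i, rfl⟩))
  rwa [map_pow, mk_of] at this

lemma z_pow (i j : Fin (r + 1)) (hij : i < j) : z p r i j ^ p = 1 := by
  have := rel_one (p := p) (Or.inr (Or.inr ⟨i, j, hij, rfl⟩))
  rwa [map_pow, map_comm, mk_of, mk_of] at this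

lemma z_ctr (i j : Fin (r + 1)) (hij : i < j) : IsCtr (z p r i j) := by
  intro g
  have hmem : ∀ x : ItoGroup p r, x ∈ Subgroup.centralizer {z p r i j} := by
    intro x
    refine PresentedGroup.generated_by _ _ (fun k => ?_) x
    rw [Subgroup.mem_centralizer_iff]
    intro y hy
    rw [Set.mem_singleton_iff] at hy
    subst hy
    show z p r i j * b p r k = b p r k * z p r i j
    have h1 : b p r k * z p r i j
        = z p r i j * b p r k * comm (b p r k) (z p r i j) := mul_eq_mul_comm _ _
    rw [comm_z_one k i j hij, mul_one] at h1
    exact h1.symm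
  exact (Subgroup.mem_centralizer_iff.mp (hmem g) _ rfl).symm

lemma comm_bb_ctr (i j : Fin (r + 1)) : IsCtr (comm (b p r i) (b p r j)) := by
  rcases lt_trichotomy i j with h | rfl | h
  · exact z_ctr i j h
  · rw [comm_self]; exact IsCtr.one
  · have : comm (b p r i) (b p r j) = (z p r j i)⁻¹ := by
      rw [z, comm_inv]
    rw [this]
    exact (z_ctr j i h).inv

variable (p r) in
/-- the subgroup generated by commutators of generators -/
def Zc : Subgroup (ItoGroup p r) :=
  Subgroup.closure {x | ∃ i j : Fin (r + 1), ∃ _ : i < j, x = z p r i j}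

lemma Zc_ctr : ∀ ζ ∈ Zc p r, IsCtr ζ := by
  intro ζ hζ
  refine Subgroup.closure_induction (p := fun g _ => IsCtr g) ?_ IsCtr.one
    (fun x y _ _ hx hy => hx.mul hy) (fun x _ hx => hx.inv) hζ
  rintro x ⟨i, j, hij, rfl⟩
  exact z_ctr i j hij

lemma z_mem (i j : Fin (r + 1)) : comm (b p r i) (b p r j) ∈ Zc p r := by
  rcases lt_trichotomy i j with h | rfl | h
  · exact Subgroup.subset_closure ⟨i, j, h, rfl⟩
  · rw [comm_self]; exact one_mem _
  · have : comm (b p r i) (b p r j) = (z p r j i)⁻¹ := by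
      rw [z, comm_inv]
    rw [this]
    exact inv_mem (Subgroup.subset_closure ⟨j, i, h, rfl⟩)

lemma comm_pow_mem (i j : Fin (r + 1)) (n m : ℕ) :
    comm (b p r i ^ n) (b p r j ^ m) ∈ Zc p r := by
  have hc : IsCtr (comm (b p r i) (b p r j)) := comm_bb_ctr i j
  have h1 : comm (b p r i ^ n) (b p r j) = comm (b p r i) (b p r j) ^ n :=
    comm_pow_left _ _ hc n
  have h2 : comm (b p r i ^ n) (b p r j ^ m) = comm (b p r i ^ n) (b p r j) ^ m :=
    comm_pow_right _ _ (h1 ▸ hc.pow n) m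
  rw [h2, h1, ← pow_mul]
  exact pow_mem (z_mem i j) _

variable (p r) in
/-- ordered products of powers of the generators -/
def Bp (n : Fin (r + 1) → ℕ) : ItoGroup p r :=
  ((List.finRange (r + 1)).map fun i => b p r i ^ n i).prod

lemma Bp_mul (n m : Fin (r + 1) → ℕ) :
    ∃ ζ ∈ Zc p r, Bp p r n * Bp p r m = Bp p r (n + m) * ζ := by
  obtain ⟨ζ, hζ, h⟩ := list_prod_mul (Zc p r) Zc_ctr (List.finRange (r + 1))
    (fun i => b p r i ^ n i) (fun i => b p r i ^ m i)
    (fun i _ j _ => ⟨comm (b p r i ^ n i) (b p r j ^ m j), comm_pow_mem i j _ _,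
      mul_eq_mul_comm _ _⟩)
  refine ⟨ζ, hζ, ?_⟩
  have he : (fun i => b p r i ^ n i * b p r i ^ m i) = fun i => b p r i ^ (n + m) i :=
    funext fun i => by rw [← pow_add]; rfl
  rw [Bp, Bp, h, Bp, ← he]

lemma Bp_one {n : Fin (r + 1) → ℕ} (h : ∀ i, p ∣ n i) : Bp p r n = 1 := by
  refine list_prod_eq_one _ _ fun i _ => ?_
  obtain ⟨k, hk⟩ := h i
  rw [hk, pow_mul, b_pow, one_pow]

lemma Bp_single (k : Fin (r + 1)) :
    Bp p r (fun i => if i = k then 1 else 0) = b p r k := by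
  have := list_prod_single (List.finRange (r + 1)) (List.nodup_finRange _)
    (fun i => b p r i ^ (if i = k then 1 else 0)) k (List.mem_finRange k)
    (fun i _ hik => by
      show b p r i ^ (if i = k then 1 else 0) = 1
      rw [if_neg hik, pow_zero])
  rw [Bp, this]
  show b p r k ^ (if k = k then 1 else 0) = b p r k
  rw [if_pos rfl, pow_one]

lemma normal_form [NeZero p] (g : ItoGroup p r) :
    ∃ n ζ, ζ ∈ Zc p r ∧ g = Bp p r n * ζ := by
  have hp0 : 0 < p := Nat.pos_of_ne_zero (NeZero.ne p)
  let NF : Subgroup (ItoGroup p r) :=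
    { carrier := {g | ∃ n ζ, ζ ∈ Zc p r ∧ g = Bp p r n * ζ}
      one_mem' := ⟨0, 1, one_mem _, by
        rw [Bp_one (n := 0) fun i => dvd_zero p, one_mul]⟩
      mul_mem' := by
        rintro x y ⟨n, ζ, hζ, rfl⟩ ⟨m, ξ, hξ, rfl⟩
        obtain ⟨η, hη, hBp⟩ := Bp_mul n m
        refine ⟨n + m, η * (ζ * ξ), mul_mem hη (mul_mem hζ hξ), ?_⟩
        calc Bp p r n * ζ * (Bp p r m * ξ) = Bp p r n * (Bp p r m * ζ) * ξ := by
              rw [Zc_ctr ζ hζ (Bp p r m)]; group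
        _ = (Bp p r n * Bp p r m) * (ζ * ξ) := by group
        _ = Bp p r (n + m) * η * (ζ * ξ) := by rw [hBp]
        _ = Bp p r (n + m) * (η * (ζ * ξ)) := by group
      inv_mem' := by
        rintro x ⟨n, ζ, hζ, rfl⟩
        set m : Fin (r + 1) → ℕ := fun i => p - n i % p with hm
        have hdvd : ∀ i, p ∣ n i + m i := by
          intro i
          have h1 : n i % p < p := Nat.mod_lt _ hp0
          have h2 : n i + m i = p * (n i / p) + p := by
            rw [hm]
            calc n i + (p - n i % p) = p * (n i / p) + n i % p + (p - n i % p) := by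
                  rw [Nat.div_add_mod]
            _ = p * (n i / p) + p := by omega
          rw [h2]
          exact Dvd.dvd.add (Dvd.intro _ rfl) dvd_rfl
        obtain ⟨η, hη, hBp⟩ := Bp_mul (p := p) (r := r) n m
        rw [Bp_one (n := n + m) hdvd, one_mul] at hBp
        have hinv : (Bp p r n)⁻¹ = Bp p r m * η⁻¹ :=
          inv_eq_of_mul_eq_one_right (by rw [← mul_assoc, hBp, mul_inv_cancel])
        refine ⟨m, ζ⁻¹ * η⁻¹, mul_mem (inv_mem hζ) (inv_mem hη), ?_⟩
        rw [mul_inv_rev, hinv]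
        calc ζ⁻¹ * (Bp p r m * η⁻¹) = (ζ⁻¹ * Bp p r m) * η⁻¹ := by group
        _ = (Bp p r m * ζ⁻¹) * η⁻¹ := by rw [← Zc_ctr ζ⁻¹ (inv_mem hζ) (Bp p r m)]
        _ = Bp p r m * (ζ⁻¹ * η⁻¹) := by group
      }
  exact PresentedGroup.generated_by _ NF
    (fun k => ⟨(fun i => if i = k then 1 else 0), 1, one_mem _, by
      rw [Bp_single, mul_one]; rfl⟩) g

variable (p r) in
/-- canonical products of commutators -/
noncomputable def Cp (M : PairIdx r → ZMod p) : ItoGroup p r :=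
  ((Finset.univ : Finset (PairIdx r)).toList.map
    fun q => z p r q.1.1 q.1.2 ^ (M q).val).prod

lemma Cp_ctr (M : PairIdx r → ZMod p) : IsCtr (Cp p r M) :=
  isCtr_list_prod _ _ fun q _ => (z_ctr _ _ q.2).pow _

lemma Cp_mem (M : PairIdx r → ZMod p) : Cp p r M ∈ Zc p r := by
  refine list_prod_mem fun x hx => ?_
  rcases List.mem_map.mp hx with ⟨q, _, rfl⟩
  have hzq : z p r q.1.1 q.1.2 ∈ Zc p r :=
    Subgroup.subset_closure ⟨q.1.1, q.1.2, q.2, rfl⟩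
  exact pow_mem hzq _

lemma pow_val_add {G : Type*} [Group G] [NeZero p] {x : G} (hx : x ^ p = 1)
    (a b0 : ZMod p) : x ^ (a.val + b0.val) = x ^ ((a + b0).val) := by
  rw [ZMod.val_add, ← pow_eq_pow_mod _ hx]

lemma Cp_mul [NeZero p] (M N : PairIdx r → ZMod p) :
    Cp p r M * Cp p r N = Cp p r (M + N) := by
  rw [Cp, Cp, list_prod_mul_exact _ _ _ (fun q _ => (z_ctr _ _ q.2).pow _), Cp]
  have he : (fun q : PairIdx r => z p r q.1.1 q.1.2 ^ (M q).val *
      z p r q.1.1 q.1.2 ^ (N q).val) =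
      fun q => z p r q.1.1 q.1.2 ^ ((M + N) q).val :=
    funext fun q => by rw [← pow_add, pow_val_add (z_pow _ _ q.2)]; rfl
  rw [he]

lemma Cp_zero : Cp p r (0 : PairIdx r → ZMod p) = 1 := by
  refine list_prod_eq_one _ _ fun q _ => ?_
  show z p r q.1.1 q.1.2 ^ ((0 : PairIdx r → ZMod p) q).val = 1
  rw [Pi.zero_apply, ZMod.val_zero, pow_zero]

lemma Cp_single [NeZero p] (hp1 : 1 < p) (i j : Fin (r + 1)) (hij : i < j) :
    Cp p r (Pi.single ⟨(i, j), hij⟩ 1) = z p r i j := by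
  haveI : Fact (1 < p) := ⟨hp1⟩
  have := list_prod_single ((Finset.univ : Finset (PairIdx r)).toList)
    (Finset.nodup_toList _)
    (fun q => z p r q.1.1 q.1.2 ^
      ((Pi.single (⟨(i, j), hij⟩ : PairIdx r) (1 : ZMod p) : PairIdx r → ZMod p) q).val)
    ⟨(i, j), hij⟩ (Finset.mem_toList.mpr (Finset.mem_univ _))
    (fun q _ hq => by
      show z p r q.1.1 q.1.2 ^
        ((Pi.single (⟨(i, j), hij⟩ : PairIdx r) (1 : ZMod p) : PairIdx r → ZMod p) q).val = 1
      rw [Pi.single_eq_of_ne hq, ZMod.val_zero, pow_zero])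
  rw [Cp, this]
  show z p r i j ^
    ((Pi.single (⟨(i, j), hij⟩ : PairIdx r) (1 : ZMod p) : PairIdx r → ZMod p) _).val = _
  refine (congrArg (fun k : ZMod p => z p r i j ^ k.val) (Pi.single_eq_same (M := fun _ : PairIdx r => ZMod p) (⟨(i, j), hij⟩ : PairIdx r) (1 : ZMod p))).trans ?_
  rw [ZMod.val_one, pow_one]

lemma Zc_ran [NeZero p] (hp1 : 1 < p) {ζ : ItoGroup p r} (hζ : ζ ∈ Zc p r) :
    ∃ M, ζ = Cp p r M := by
  refine Subgroup.closure_induction (p := fun g _ => ∃ M, g = Cp p r M) ?_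
    ⟨0, Cp_zero.symm⟩ ?_ ?_ hζ
  · rintro x ⟨i, j, hij, rfl⟩
    exact ⟨_, (Cp_single hp1 i j hij).symm⟩
  · rintro x y _ _ ⟨M, rfl⟩ ⟨N, rfl⟩
    exact ⟨M + N, Cp_mul M N⟩
  · rintro x _ ⟨M, rfl⟩
    exact ⟨-M, (eq_inv_of_mul_eq_one_left
      (by rw [Cp_mul, neg_add_cancel, Cp_zero])).symm⟩

section Phi

variable [NeZero p]

lemma hrels : ∀ w ∈ itoRels p r, FreeGroup.lift (MD.gen p r) w = 1 := by
  rintro w (⟨i, j, k, hij, rfl⟩ | ⟨i, rfl⟩ | ⟨i, j, hij, rfl⟩)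
  · rw [map_comm, map_comm, FreeGroup.lift_apply_of, FreeGroup.lift_apply_of, FreeGroup.lift_apply_of,
      MD.comm_gen i j hij]
    ext q
    · simp [MD.comm_eq]
    · simp [MD.comm_eq]
  · rw [map_pow, FreeGroup.lift_apply_of, MD.gen_pow_p]
  · rw [map_pow, map_comm, FreeGroup.lift_apply_of, FreeGroup.lift_apply_of, MD.comm_gen i j hij,
      MD.pow_of_a_zero]
    ext q
    · simp
    · simp [Pi.smul_apply, nsmul_eq_mul, ZMod.natCast_self]

variable (p r) in
/-- the isomorphism to the concrete model -/
noncomputable def phi : ItoGroup p r →* MD p r := PresentedGroup.toGroup hrels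

lemma phi_b (i : Fin (r + 1)) : phi p r (b p r i) = MD.gen p r i :=
  PresentedGroup.toGroup.of hrels

lemma phi_z (i j : Fin (r + 1)) (hij : i < j) :
    phi p r (z p r i j) = ⟨0, Pi.single ⟨(i, j), hij⟩ 1⟩ := by
  rw [z, map_comm, phi_b, phi_b, MD.comm_gen i j hij]

lemma MD_prod_diag (L : List (Fin (r + 1))) (hL : L.Pairwise (· < ·))
    (cf : Fin (r + 1) → ZMod p) :
    (L.map fun i => (⟨Pi.single i (cf i), 0⟩ : MD p r)).prod
      = ⟨fun j => if j ∈ L then cf j else 0, 0⟩ := by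
  induction L with
  | nil => ext q <;> simp
  | cons a t ih =>
    have hat : ∀ x ∈ t, a < x := fun x hx => (List.pairwise_cons.mp hL).1 x hx
    rw [List.map_cons, List.prod_cons, ih (List.pairwise_cons.mp hL).2]
    ext j
    · simp only [MD.mul_a, Pi.add_apply]
      rcases eq_or_ne j a with rfl | hj
      · have hnt : j ∉ t := fun h => absurd (hat j h) (lt_irrefl j)
        simp [Pi.single_eq_same, hnt]
      · simp [Pi.single_eq_of_ne hj, List.mem_cons, hj]
    · simp only [MD.mul_c, Pi.add_apply, Pi.zero_apply, add_zero, zero_add]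
      rcases eq_or_ne j.1.2 a with h2 | h2
      · have hq1 : j.1.1 ∉ t := by
          intro h
          have h1 := j.2
          rw [h2] at h1
          exact absurd h1 (lt_asymm (hat _ h))
        simp [hq1]
      · simp [Pi.single_eq_of_ne h2]

lemma phi_Bp (n : Fin (r + 1) → ℕ) :
    phi p r (Bp p r n) = ⟨fun i => (n i : ZMod p), 0⟩ := by
  rw [Bp, map_list_prod, List.map_map]
  have he : (⇑(phi p r) ∘ fun i => b p r i ^ n i)
      = fun i => (⟨Pi.single i ((n i : ZMod p)), 0⟩ : MD p r) := by
    funext i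
    simp only [Function.comp_apply, map_pow, phi_b, MD.gen_pow]
  rw [he, MD_prod_diag _ (List.pairwise_lt_finRange _)]
  ext j
  · simp [List.mem_finRange]
  · simp

lemma MD_prod_c (L : List (PairIdx r)) (g : PairIdx r → (PairIdx r → ZMod p)) :
    (L.map fun q => (⟨0, g q⟩ : MD p r)).prod = ⟨0, (L.map g).sum⟩ := by
  induction L with
  | nil => ext q <;> simp
  | cons a t ih =>
    rw [List.map_cons, List.prod_cons, ih, MD.mul_of_a_zero, List.map_cons, List.sum_cons]

lemma phi_Cp (M : PairIdx r → ZMod p) : phi p r (Cp p r M) = ⟨0, M⟩ := by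
  rw [Cp, map_list_prod, List.map_map]
  have he : (⇑(phi p r) ∘ fun q : PairIdx r => z p r q.1.1 q.1.2 ^ (M q).val)
      = fun q : PairIdx r => (⟨0, Pi.single q (M q)⟩ : MD p r) := by
    funext q
    rw [Function.comp_apply, map_pow, phi_z q.1.1 q.1.2 q.2, MD.pow_of_a_zero]
    ext j
    · simp
    · have hq : (⟨(q.1.1, q.1.2), q.2⟩ : PairIdx r) = q := rfl
      rcases eq_or_ne j q with rfl | hj
      · simp [hq, Pi.single_eq_same, Pi.smul_apply, nsmul_eq_mul,
          ZMod.natCast_val, ZMod.cast_id]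
      · simp [hq, Pi.single_eq_of_ne hj]
  rw [he, MD_prod_c]
  have hs : ((Finset.univ : Finset (PairIdx r)).toList.map fun q => Pi.single q (M q)).sum
      = M := by
    rw [Finset.sum_map_toList]
    funext j
    rw [Finset.sum_apply]
    simp [Pi.single_apply, Finset.sum_ite_eq]
  rw [hs]

lemma phi_bij (hp1 : 1 < p) : Function.Bijective (phi p r) := by
  constructor
  · rw [injective_iff_map_eq_one]
    intro g hg
    obtain ⟨n, ζ, hζ, rfl⟩ := normal_form g
    obtain ⟨M, rfl⟩ := Zc_ran hp1 hζ
    have hfe : (fun i => b p r i ^ n i) = fun i => b p r i ^ (n i % p) :=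
      funext fun i => pow_eq_pow_mod _ (b_pow i)
    have hBp' : Bp p r n = Bp p r (fun i => n i % p) := by rw [Bp, Bp, hfe]
    rw [hBp'] at hg ⊢
    rw [map_mul, phi_Bp, phi_Cp] at hg
    have hmul : (⟨fun i => ((n i % p : ℕ) : ZMod p), 0⟩ : MD p r) * ⟨0, M⟩
        = ⟨fun i => ((n i % p : ℕ) : ZMod p), M⟩ := by
      ext q
      · simp
      · simp [MD.mul_c]
    rw [hmul] at hg
    have ha := congrArg MD.a hg
    have hc := congrArg MD.c hg
    simp only [MD.one_a, MD.one_c] at ha hc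
    have hz : ∀ i, n i % p = 0 := by
      intro i
      have h1 : ((n i % p : ℕ) : ZMod p) = 0 := congrFun ha i
      have h2 : p ∣ n i % p := (ZMod.natCast_eq_zero_iff _ _).mp h1
      exact Nat.eq_zero_of_dvd_of_lt h2 (Nat.mod_lt _ (Nat.pos_of_ne_zero (NeZero.ne p)))
    rw [hc, Cp_zero, mul_one]
    exact Bp_one fun i => by rw [hz i]; exact dvd_zero p
  · intro x
    refine ⟨Bp p r (fun i => (x.a i).val) * Cp p r x.c, ?_⟩
    rw [map_mul, phi_Bp, phi_Cp]
    ext q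
    · simp [ZMod.natCast_val, ZMod.cast_id]
    · simp [MD.mul_c]

end Phi

end Ito

section Counting

variable {p r : ℕ} [Fact p.Prime]

/-- the wedge of two vectors -/
def wedge (v w : Fin (r + 1) → ZMod p) : PairIdx r → ZMod p :=
  fun q => v q.1.1 * w q.1.2 - v q.1.2 * w q.1.1

lemma MD.comm_wedge (x y : MD p r) : comm x y = ⟨0, wedge x.a y.a⟩ :=
  MD.comm_eq x y

lemma wedge_all {v w u z : Fin (r + 1) → ZMod p} (h : wedge v w = wedge u z) :
    ∀ a b : Fin (r + 1), v a * w b - v b * w a = u a * z b - u b * z a := by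
  intro a b
  rcases lt_trichotomy a b with hab | rfl | hab
  · exact congrFun h ⟨(a, b), hab⟩
  · ring
  · have := congrFun h ⟨(b, a), hab⟩
    simp only [wedge] at this
    linear_combination -this

/-- counting pairs with zero wedge, for fixed nonzero `v` -/
noncomputable def solEquivZero (v : Fin (r + 1) → ZMod p) (hv : v ≠ 0) :
    ZMod p ≃ {w : Fin (r + 1) → ZMod p // wedge v w = 0} := by
  have hex : ∃ i, v i ≠ 0 := by
    by_contra hc
    push_neg at hc
    exact hv (funext fun i => hc i)
  classical
  refine
    { toFun := fun t => ⟨t • v, funext fun q => by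
        simp only [wedge, Pi.smul_apply, smul_eq_mul, Pi.zero_apply]; ring⟩
      invFun := fun s => s.1 hex.choose * (v hex.choose)⁻¹
      left_inv := fun t => by
        simp only [Pi.smul_apply, smul_eq_mul]
        field_simp [hex.choose_spec]
      right_inv := fun s => by
        obtain ⟨w, hw⟩ := s
        have hall := wedge_all (by rw [hw]; funext q; simp [wedge] : wedge v w = wedge v 0)
        refine Subtype.ext (funext fun j => ?_)
        have hinv : (v hex.choose)⁻¹ * v hex.choose = 1 :=
          inv_mul_cancel₀ hex.choose_spec
        have h1 := hall hex.choose j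
        simp only [Pi.zero_apply, mul_zero, zero_mul, sub_zero] at h1
        show w hex.choose * (v hex.choose)⁻¹ * v j = w j
        linear_combination (-(v hex.choose)⁻¹) * h1 + (w j) * hinv }

lemma card_wedge_zero :
    Fintype.card {vw : (Fin (r + 1) → ZMod p) × (Fin (r + 1) → ZMod p) //
      wedge vw.1 vw.2 = 0} = p ^ (r + 2) + p ^ (r + 1) - p := by
  classical
  haveI : NeZero p := ⟨(Fact.out : p.Prime).ne_zero⟩
  rw [Fintype.card_congr (Equiv.subtypeProdEquivSigmaSubtype
    (fun v w : Fin (r + 1) → ZMod p => wedge v w = 0))]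
  rw [Fintype.card_sigma]
  have hcard : ∀ v : Fin (r + 1) → ZMod p,
      Fintype.card {w // wedge v w = 0} = if v = 0 then p ^ (r + 1) else p := by
    intro v
    rcases eq_or_ne v 0 with rfl | hv
    · rw [if_pos rfl]
      have : ∀ w : Fin (r + 1) → ZMod p, wedge (0 : Fin (r + 1) → ZMod p) w = 0 :=
        fun w => funext fun q => by simp [wedge]
      rw [Fintype.card_congr (Equiv.subtypeUnivEquiv this)]
      rw [Fintype.card_fun, ZMod.card, Fintype.card_fin]
    · rw [if_neg hv, ← Fintype.card_congr (solEquivZero v hv), ZMod.card]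
  rw [Finset.sum_congr rfl fun v _ => hcard v]
  rw [Finset.sum_ite, Finset.sum_const, Finset.sum_const]
  rw [Finset.filter_eq' Finset.univ (0 : Fin (r + 1) → ZMod p)]
  rw [if_pos (Finset.mem_univ _)]
  have hV : Fintype.card (Fin (r + 1) → ZMod p) = p ^ (r + 1) := by
    rw [Fintype.card_fun, ZMod.card, Fintype.card_fin]
  have h2 : (Finset.univ.filter fun v : Fin (r + 1) → ZMod p => ¬v = 0).card
      = p ^ (r + 1) - 1 := by
    rw [Finset.filter_not, Finset.card_sdiff_of_subset (Finset.filter_subset _ _),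
      Finset.filter_eq' Finset.univ, if_pos (Finset.mem_univ _), Finset.card_univ, hV]
    rfl
  rw [Finset.card_singleton, h2, smul_eq_mul, smul_eq_mul, one_mul]
  have hple : p ≤ p ^ (r + 2) := Nat.le_self_pow (by omega) p
  have h3 : (p ^ (r + 1) - 1) * p = p ^ (r + 2) - p := by
    rw [Nat.sub_mul, one_mul, ← pow_succ]
  rw [h3]
  omega

end Counting

section Counting2

variable {p r : ℕ} [Fact p.Prime]

lemma card_det_one :
    Fintype.card {m : ((ZMod p) × (ZMod p)) × ((ZMod p) × (ZMod p)) //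
      m.1.1 * m.2.2 - m.1.2 * m.2.1 = 1} = p ^ 3 - p := by
  classical
  haveI : NeZero p := ⟨(Fact.out : p.Prime).ne_zero⟩
  rw [Fintype.card_congr (Equiv.subtypeProdEquivSigmaSubtype
    (fun x y : (ZMod p) × (ZMod p) => x.1 * y.2 - x.2 * y.1 = 1))]
  rw [Fintype.card_sigma]
  have hcard : ∀ x : (ZMod p) × (ZMod p),
      Fintype.card {y : (ZMod p) × (ZMod p) // x.1 * y.2 - x.2 * y.1 = 1}
        = if x = 0 then 0 else p := by
    intro x
    rcases eq_or_ne x 0 with rfl | hx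
    · rw [if_pos rfl]
      rw [Fintype.card_eq_zero_iff]
      refine ⟨fun s => ?_⟩
      have := s.2
      simp only [Prod.fst_zero, Prod.snd_zero, zero_mul, sub_zero, sub_self] at this
      exact zero_ne_one this
    · rw [if_neg hx]
      rcases eq_or_ne x.1 0 with h1 | h1
      · have h2 : x.2 ≠ 0 := by
          intro h2
          exact hx (Prod.ext h1 h2)
        have hinv : x.2⁻¹ * x.2 = 1 := inv_mul_cancel₀ h2
        have E : ZMod p ≃ {y : (ZMod p) × (ZMod p) // x.1 * y.2 - x.2 * y.1 = 1} :=
          { toFun := fun t => ⟨(-x.2⁻¹, t), by rw [h1]; field_simp; ring⟩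
            invFun := fun s => s.1.2
            left_inv := fun t => rfl
            right_inv := fun s => by
              obtain ⟨⟨y1, y2⟩, hy⟩ := s
              refine Subtype.ext (Prod.ext ?_ rfl)
              show -x.2⁻¹ = y1
              rw [h1] at hy
              linear_combination x.2⁻¹ * hy + y1 * hinv }
        rw [← Fintype.card_congr E, ZMod.card]
      · have hinv : x.1⁻¹ * x.1 = 1 := inv_mul_cancel₀ h1
        have E : ZMod p ≃ {y : (ZMod p) × (ZMod p) // x.1 * y.2 - x.2 * y.1 = 1} :=
          { toFun := fun t => ⟨(t, (1 + x.2 * t) * x.1⁻¹), by field_simp; ring⟩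
            invFun := fun s => s.1.1
            left_inv := fun t => rfl
            right_inv := fun s => by
              obtain ⟨⟨y1, y2⟩, hy⟩ := s
              refine Subtype.ext (Prod.ext rfl ?_)
              show (1 + x.2 * y1) * x.1⁻¹ = y2
              linear_combination (-x.1⁻¹) * hy + y2 * hinv }
        rw [← Fintype.card_congr E, ZMod.card]
  rw [Finset.sum_congr rfl fun x _ => hcard x]
  rw [Finset.sum_ite, Finset.sum_const, Finset.sum_const]
  have h2 : (Finset.univ.filter fun x : (ZMod p) × (ZMod p) => ¬x = 0).card
      = p ^ 2 - 1 := by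
    rw [Finset.filter_not, Finset.card_sdiff_of_subset (Finset.filter_subset _ _),
      Finset.filter_eq' Finset.univ, if_pos (Finset.mem_univ _), Finset.card_univ,
      Fintype.card_prod, ZMod.card]
    rw [Finset.card_singleton, sq]
  rw [h2, smul_eq_mul, smul_eq_mul, mul_zero, zero_add]
  have hp1 : 1 ≤ p ^ 2 := Nat.one_le_pow _ _ (Fact.out : p.Prime).pos
  rw [Nat.sub_mul, one_mul, ← pow_succ]

end Counting2

section Counting3

variable {p r : ℕ} [Fact p.Prime]

lemma card_wedge_eq {u z : Fin (r + 1) → ZMod p} (hA : wedge u z ≠ 0) :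
    Fintype.card {vw : (Fin (r + 1) → ZMod p) × (Fin (r + 1) → ZMod p) //
      wedge vw.1 vw.2 = wedge u z} = p ^ 3 - p := by
  classical
  obtain ⟨q₀, hq₀⟩ : ∃ q, wedge u z q ≠ 0 := by
    by_contra hc
    push_neg at hc
    exact hA (funext hc)
  set i₀ := q₀.1.1 with hi₀
  set j₀ := q₀.1.2 with hj₀
  have hA₀ : u i₀ * z j₀ - u j₀ * z i₀ ≠ 0 := hq₀
  have hinv : (u i₀ * z j₀ - u j₀ * z i₀)⁻¹ * (u i₀ * z j₀ - u j₀ * z i₀) = 1 :=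
    inv_mul_cancel₀ hA₀
  set s : ZMod p := (u i₀ * z j₀ - u j₀ * z i₀)⁻¹ with hs
  -- the bijection from matrices of determinant 1
  set F : {m : ((ZMod p) × (ZMod p)) × ((ZMod p) × (ZMod p)) //
      m.1.1 * m.2.2 - m.1.2 * m.2.1 = 1} →
      {vw : (Fin (r + 1) → ZMod p) × (Fin (r + 1) → ZMod p) //
        wedge vw.1 vw.2 = wedge u z} :=
    fun m => ⟨(fun k => m.1.1.1 * u k + m.1.1.2 * z k,
               fun k => m.1.2.1 * u k + m.1.2.2 * z k),
      funext fun q => by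
        show (m.1.1.1 * u q.1.1 + m.1.1.2 * z q.1.1) *
            (m.1.2.1 * u q.1.2 + m.1.2.2 * z q.1.2) -
            (m.1.1.1 * u q.1.2 + m.1.1.2 * z q.1.2) *
            (m.1.2.1 * u q.1.1 + m.1.2.2 * z q.1.1) =
            u q.1.1 * z q.1.2 - u q.1.2 * z q.1.1
        linear_combination (u q.1.1 * z q.1.2 - u q.1.2 * z q.1.1) * m.2⟩
    with hF
  have hbij : Function.Bijective F := by
    constructor
    · rintro ⟨⟨⟨a, b⟩, ⟨c, d⟩⟩, hm⟩ ⟨⟨⟨a', b'⟩, ⟨c', d'⟩⟩, hm'⟩ h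
      have hv := congrArg (fun t => t.1.1) h
      have hw := congrArg (fun t => t.1.2) h
      simp only [hF] at hv hw
      have hv1 := congrFun hv i₀
      have hv2 := congrFun hv j₀
      have hw1 := congrFun hw i₀
      have hw2 := congrFun hw j₀
      have ea : a = a' := by
        have e1 : (a - a') * (u i₀ * z j₀ - u j₀ * z i₀) = 0 := by
          linear_combination z j₀ * hv1 - z i₀ * hv2
        rcases mul_eq_zero.mp e1 with h0 | h0
        · exact sub_eq_zero.mp h0
        · exact absurd h0 hA₀
      have eb : b = b' := by
        have e1 : (b - b') * (u i₀ * z j₀ - u j₀ * z i₀) = 0 := by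
          linear_combination (-(u j₀)) * hv1 + u i₀ * hv2
        rcases mul_eq_zero.mp e1 with h0 | h0
        · exact sub_eq_zero.mp h0
        · exact absurd h0 hA₀
      have ec : c = c' := by
        have e1 : (c - c') * (u i₀ * z j₀ - u j₀ * z i₀) = 0 := by
          linear_combination z j₀ * hw1 - z i₀ * hw2
        rcases mul_eq_zero.mp e1 with h0 | h0
        · exact sub_eq_zero.mp h0
        · exact absurd h0 hA₀
      have ed : d = d' := by
        have e1 : (d - d') * (u i₀ * z j₀ - u j₀ * z i₀) = 0 := by
          linear_combination (-(u j₀)) * hw1 + u i₀ * hw2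
        rcases mul_eq_zero.mp e1 with h0 | h0
        · exact sub_eq_zero.mp h0
        · exact absurd h0 hA₀
      subst ea; subst eb; subst ec; subst ed
      exact Subtype.ext rfl
    · rintro ⟨⟨v, w⟩, hvw⟩
      have hall := wedge_all hvw
      have hd : ((v i₀ * z j₀ - v j₀ * z i₀) * s) * ((u i₀ * w j₀ - u j₀ * w i₀) * s) -
          ((u i₀ * v j₀ - u j₀ * v i₀) * s) * ((w i₀ * z j₀ - w j₀ * z i₀) * s) = 1 := by
        have hdet : (v i₀ * z j₀ - v j₀ * z i₀) * (u i₀ * w j₀ - u j₀ * w i₀) -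
            (u i₀ * v j₀ - u j₀ * v i₀) * (w i₀ * z j₀ - w j₀ * z i₀) =
            (u i₀ * z j₀ - u j₀ * z i₀) * (u i₀ * z j₀ - u j₀ * z i₀) := by
          linear_combination (u i₀ * z j₀ - u j₀ * z i₀) * hall i₀ j₀
        linear_combination s * s * hdet + (s * (u i₀ * z j₀ - u j₀ * z i₀) + 1) * hinv
      refine ⟨⟨⟨((v i₀ * z j₀ - v j₀ * z i₀) * s, (u i₀ * v j₀ - u j₀ * v i₀) * s),
        ((w i₀ * z j₀ - w j₀ * z i₀) * s, (u i₀ * w j₀ - u j₀ * w i₀) * s)⟩, hd⟩, ?_⟩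
      refine Subtype.ext (Prod.ext (funext fun k => ?_) (funext fun k => ?_))
      · show (v i₀ * z j₀ - v j₀ * z i₀) * s * u k + (u i₀ * v j₀ - u j₀ * v i₀) * s * z k = v k
        have hv' : (v i₀ * z j₀ - v j₀ * z i₀) * u k + (u i₀ * v j₀ - u j₀ * v i₀) * z k
            = v k * (u i₀ * z j₀ - u j₀ * z i₀) := by
          linear_combination (v i₀) * hall j₀ k - (v j₀) * hall i₀ k + (v k) * hall i₀ j₀
        linear_combination s * hv' + v k * hinv
      · show (w i₀ * z j₀ - w j₀ * z i₀) * s * u k + (u i₀ * w j₀ - u j₀ * w i₀) * s * z k = w k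
        have hw' : (w i₀ * z j₀ - w j₀ * z i₀) * u k + (u i₀ * w j₀ - u j₀ * w i₀) * z k
            = w k * (u i₀ * z j₀ - u j₀ * z i₀) := by
          linear_combination (w i₀) * hall j₀ k - (w j₀) * hall i₀ k + (w k) * hall i₀ j₀
        linear_combination s * hw' + w k * hinv
  rw [← Fintype.card_congr (Equiv.ofBijective F hbij), card_det_one]

end Counting3

section Final

variable {p r : ℕ}

lemma mequiv_comm {G H : Type*} [Group G] [Group H] (e : G ≃* H) (x y : G) :
    e (comm x y) = comm (e x) (e y) := by simp [comm]

/-- pairs i < j are counted by a triangular number -/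
def pairEquiv : PairIdx r ≃ Σ j : Fin (r + 1), Fin j.val where
  toFun q := ⟨q.1.2, ⟨q.1.1.val, q.2⟩⟩
  invFun s := ⟨(⟨s.2.val, lt_trans s.2.isLt s.1.isLt⟩, s.1), s.2.isLt⟩
  left_inv q := rfl
  right_inv s := rfl

lemma card_pairIdx_mul_two : Fintype.card (PairIdx r) * 2 = r * (r + 1) := by
  rw [Fintype.card_congr pairEquiv, Fintype.card_sigma]
  simp only [Fintype.card_fin]
  rw [Fin.sum_univ_eq_sum_range (fun i => i) (r + 1), Finset.sum_range_id_mul_two]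
  simp [Nat.mul_comm]

variable [Fact p.Prime]

/-- the fiber in the model splits -/
def fiberEquiv (A : PairIdx r → ZMod p) :
    (fiber (⟨0, A⟩ : MD p r)) ≃
      {vw : (Fin (r + 1) → ZMod p) × (Fin (r + 1) → ZMod p) // wedge vw.1 vw.2 = A} ×
        ((PairIdx r → ZMod p) × (PairIdx r → ZMod p)) where
  toFun s := ⟨⟨(s.1.1.a, s.1.2.a), by
      have hs : comm s.1.1 s.1.2 = (⟨0, A⟩ : MD p r) := s.2
      rw [MD.comm_wedge] at hs
      exact congrArg MD.c hs⟩, (s.1.1.c, s.1.2.c)⟩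
  invFun t := ⟨(⟨t.1.1.1, t.2.1⟩, ⟨t.1.1.2, t.2.2⟩), by
      show comm _ _ = _
      rw [MD.comm_wedge]
      exact congrArg (fun X => (⟨0, X⟩ : MD p r)) t.1.2⟩
  left_inv s := rfl
  right_inv t := rfl

set_option maxHeartbeats 1000000 in
lemma card_fiber_model (A : PairIdx r → ZMod p) :
    Nat.card (fiber (⟨0, A⟩ : MD p r)) =
      Fintype.card {vw : (Fin (r + 1) → ZMod p) × (Fin (r + 1) → ZMod p) //
        wedge vw.1 vw.2 = A} * p ^ (r ^ 2 + r) := by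
  classical
  haveI : NeZero p := ⟨(Fact.out : p.Prime).ne_zero⟩
  rw [Nat.card_congr (fiberEquiv A), Nat.card_prod, Nat.card_eq_fintype_card,
    Nat.card_eq_fintype_card]
  congr 1
  rw [Fintype.card_prod, Fintype.card_fun, ZMod.card, ← pow_add]
  congr 1
  have h := card_pairIdx_mul_two (r := r)
  have : r * (r + 1) = r ^ 2 + r := by ring
  omega

end Final


/-- the sizes of the fibers of the commutator word map on Ito's
group `G_r`. -/
theorem stmt8 (p r : ℕ) (hp : p.Prime) (hp2 : 2 < p) (hr : 1 ≤ r) :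
    (∀ g : ItoGroup p r, g ∈ KG (ItoGroup p r) → g ≠ 1 →
      Nat.card (fiber g) = (p ^ 2 - 1) * p ^ (r ^ 2 + r + 1)) ∧
    Nat.card (fiber (1 : ItoGroup p r)) =
      (p ^ (r + 1) + p ^ r - 1) * p ^ (r ^ 2 + r + 1) := by
  haveI hPrime : Fact p.Prime := ⟨hp⟩
  haveI : NeZero p := ⟨hp.ne_zero⟩
  have hp1 : 1 < p := hp.one_lt
  classical
  set e := MulEquiv.ofBijective (Ito.phi p r) (Ito.phi_bij hp1) with he
  have hfib : ∀ g : ItoGroup p r, Nat.card (fiber g) = Nat.card (fiber (e g)) := by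
    intro g
    apply Nat.card_congr
    refine Equiv.subtypeEquiv (Equiv.prodCongr e.toEquiv e.toEquiv) fun q => ?_
    show comm q.1 q.2 = g ↔ comm (e q.1) (e q.2) = e g
    rw [← mequiv_comm e q.1 q.2]
    exact ⟨fun hh => by rw [hh], fun hh => e.injective hh⟩
  constructor
  · intro g hg hg1
    obtain ⟨x, y, hxy⟩ := hg
    have heg : e g = ⟨0, wedge (e x).a (e y).a⟩ := by
      rw [← hxy, mequiv_comm e x y, MD.comm_wedge]
    have hA : wedge (e x).a (e y).a ≠ 0 := by
      intro h0
      apply hg1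
      have h1 : e g = (1 : MD p r) := by rw [heg, h0]; rfl
      exact e.injective (by rw [h1, map_one])
    rw [hfib g, heg, card_fiber_model, card_wedge_eq hA]
    have h1 : p ^ 3 - p = (p ^ 2 - 1) * p := by
      rw [Nat.sub_mul, one_mul, ← pow_succ]
    rw [h1, mul_assoc, mul_comm p (p ^ (r ^ 2 + r)), ← pow_succ]
  · have he1 : e (1 : ItoGroup p r) = (⟨0, (0 : PairIdx r → ZMod p)⟩ : MD p r) := by
      rw [map_one]; rfl
    rw [hfib 1, he1, card_fiber_model, card_wedge_zero]
    have h2 : p ^ (r + 2) + p ^ (r + 1) - p = (p ^ (r + 1) + p ^ r - 1) * p := by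
      have e1 : (p ^ (r + 1) + p ^ r - 1) * p = (p ^ (r + 1) + p ^ r) * p - p := by
        rw [Nat.sub_mul, one_mul]
      rw [e1, Nat.add_mul, ← pow_succ, ← pow_succ]
    rw [h2, mul_assoc, mul_comm p (p ^ (r ^ 2 + r)), ← pow_succ]


end Paper
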